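/- Let r(z₁,z₂,z₃) = Re(z₁) + |z₂|²·Re(z₂² − z₃³) + |z₃|²·Re(z₃²) − Re(z₂²·conj(z₃)). Suppose γ(t) = (0, γ²(t), γ³(t)) is a holomorphic curve with γ²(0) = γ³(0) = 0 and (γ²)'(0) ≠ 0 and (γ³)'(0) ≠ 0. Then the coefficient of t²·conj(t) in the Taylor expansion of r∘γ at 0 is nonzero; in particular r∘γ vanishes to order exactly 3 at 0. -/

import Mathlib

open Complex Filter Topology

/-- Wirtinger derivative ∂/∂t of a function of one complex variable. -/
noncomputable def wd (f : ℂ → ℂ) : ℂ → ℂ := fun t =>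
  (fderiv ℝ f t 1 - Complex.I * fderiv ℝ f t Complex.I) / 2

/-- Wirtinger derivative ∂/∂t̄ of a function of one complex variable. -/
noncomputable def wdbar (f : ℂ → ℂ) : ℂ → ℂ := fun t =>
  (fderiv ℝ f t 1 + Complex.I * fderiv ℝ f t Complex.I) / 2

/-- D^{a,b}[f] = (∂/∂t)^a (∂/∂t̄)^b f. -/
noncomputable def Dab (a b : ℕ) (f : ℂ → ℂ) : ℂ → ℂ := wd^[a] (wdbar^[b] f)

noncomputable def rDef (z₁ z₂ z₃ : ℂ) : ℝ :=
  z₁.re + ‖z₂‖ ^ 2 * (z₂ ^ 2 - z₃ ^ 3).re + ‖z₃‖ ^ 2 * (z₃ ^ 2).re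
    - (z₂ ^ 2 * (starRingEnd ℂ) z₃).re

-- basic analyticity of deriv
lemma analyticAt_deriv {f : ℂ → ℂ} {x : ℂ} (h : AnalyticAt ℂ f x) :
    AnalyticAt ℂ (deriv f) x := by
  have h1 : AnalyticAt ℂ (fderiv ℂ f) x := h.fderiv
  have h2 : AnalyticAt ℂ (fun y => (ContinuousLinearMap.apply ℂ ℂ (1 : ℂ)) (fderiv ℂ f y)) x :=
    ((ContinuousLinearMap.apply ℂ ℂ (1 : ℂ)).analyticAt _).comp h1
  have : (fun y => (ContinuousLinearMap.apply ℂ ℂ (1 : ℂ)) (fderiv ℂ f y)) = deriv f := by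
    funext y
    simp [ContinuousLinearMap.apply_apply, fderiv_apply_one_eq_deriv]
  rwa [this] at h2

lemma analyticAt_iter_deriv {f : ℂ → ℂ} {x : ℂ} (h : AnalyticAt ℂ f x) (n : ℕ) :
    AnalyticAt ℂ (deriv^[n] f) x := by
  induction n with
  | zero => exact h
  | succ n ih =>
    rw [Function.iterate_succ_apply']
    exact analyticAt_deriv ih

lemma fderiv_real_apply {A : ℂ → ℂ} {t : ℂ} (hA : DifferentiableAt ℂ A t) (v : ℂ) :
    fderiv ℝ A t v = v * deriv A t := by
  rw [hA.fderiv_restrictScalars ℝ]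
  show fderiv ℂ A t v = v * deriv A t
  rw [← fderiv_apply_one_eq_deriv]
  have := (fderiv ℂ A t).map_smul v (1 : ℂ)
  simpa [smul_eq_mul] using this

lemma differentiableAt_conj_comp {B : ℂ → ℂ} {t : ℂ} (hB : DifferentiableAt ℝ B t) :
    DifferentiableAt ℝ (fun u => (starRingEnd ℂ) (B u)) t := by
  exact (Complex.conjCLE.differentiable.differentiableAt).comp t hB

lemma fderiv_conj_comp_apply {B : ℂ → ℂ} {t : ℂ} (hB : DifferentiableAt ℂ B t) (v : ℂ) :
    fderiv ℝ (fun u => (starRingEnd ℂ) (B u)) t v = (starRingEnd ℂ) (v * deriv B t) := by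
  have h1 : fderiv ℝ (fun u => Complex.conjCLE (B u)) t
      = (Complex.conjCLE : ℂ ≃L[ℝ] ℂ).toContinuousLinearMap.comp (fderiv ℝ B t) := by
    have := Complex.conjCLE.comp_fderiv (f := B) (x := t)
    simpa [Function.comp_def, Complex.conjCAE_apply] using this
  have h2 : (fun u => (starRingEnd ℂ) (B u)) = fun u => Complex.conjCLE (B u) := by
    funext u; simp [Complex.conjCLE_apply]
  rw [h2, h1]
  simp [fderiv_real_apply hB v, Complex.conjCLE_apply]

lemma fderiv_mul_conj_apply {A B : ℂ → ℂ} {t : ℂ} (hA : DifferentiableAt ℂ A t)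
    (hB : DifferentiableAt ℂ B t) (v : ℂ) :
    fderiv ℝ (fun u => A u * (starRingEnd ℂ) (B u)) t v
      = A t * (starRingEnd ℂ) (v * deriv B t) + (starRingEnd ℂ) (B t) * (v * deriv A t) := by
  rw [fderiv_fun_mul (hA.restrictScalars ℝ) (differentiableAt_conj_comp (hB.restrictScalars ℝ))]
  simp only [ContinuousLinearMap.add_apply, ContinuousLinearMap.smul_apply, smul_eq_mul]
  rw [fderiv_conj_comp_apply hB v, fderiv_real_apply hA v]

lemma wd_mul_conj {A B : ℂ → ℂ} {t : ℂ} (hA : DifferentiableAt ℂ A t)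
    (hB : DifferentiableAt ℂ B t) :
    wd (fun u => A u * (starRingEnd ℂ) (B u)) t = deriv A t * (starRingEnd ℂ) (B t) := by
  simp only [wd, fderiv_mul_conj_apply hA hB]
  simp only [map_mul, map_one, Complex.conj_I]
  ring_nf
  simp only [Complex.I_sq]
  ring

lemma wdbar_mul_conj {A B : ℂ → ℂ} {t : ℂ} (hA : DifferentiableAt ℂ A t)
    (hB : DifferentiableAt ℂ B t) :
    wdbar (fun u => A u * (starRingEnd ℂ) (B u)) t = A t * (starRingEnd ℂ) (deriv B t) := by
  simp only [wdbar, fderiv_mul_conj_apply hA hB]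
  simp only [map_mul, map_one, Complex.conj_I]
  ring_nf
  simp only [Complex.I_sq]
  ring

lemma wd_sum {ι : Type*} (s : Finset ι) (F : ι → ℂ → ℂ) {t : ℂ}
    (h : ∀ i ∈ s, DifferentiableAt ℝ (F i) t) :
    wd (fun u => ∑ i ∈ s, F i u) t = ∑ i ∈ s, wd (F i) t := by
  simp only [wd, fderiv_fun_sum h, ContinuousLinearMap.coe_sum', Finset.sum_apply]
  rw [Finset.mul_sum, ← Finset.sum_sub_distrib, ← Finset.sum_div]

lemma wdbar_sum {ι : Type*} (s : Finset ι) (F : ι → ℂ → ℂ) {t : ℂ}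
    (h : ∀ i ∈ s, DifferentiableAt ℝ (F i) t) :
    wdbar (fun u => ∑ i ∈ s, F i u) t = ∑ i ∈ s, wdbar (F i) t := by
  simp only [wdbar, fderiv_fun_sum h, ContinuousLinearMap.coe_sum', Finset.sum_apply]
  rw [Finset.mul_sum, ← Finset.sum_add_distrib, ← Finset.sum_div]

lemma wd_congr {f g : ℂ → ℂ} {x : ℂ} (h : f =ᶠ[𝓝 x] g) : wd f =ᶠ[𝓝 x] wd g :=
  ((h.fderiv (𝕜 := ℝ))).mono fun t ht => by simp [wd, ht]

lemma wdbar_congr {f g : ℂ → ℂ} {x : ℂ} (h : f =ᶠ[𝓝 x] g) : wdbar f =ᶠ[𝓝 x] wdbar g :=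
  ((h.fderiv (𝕜 := ℝ))).mono fun t ht => by simp [wdbar, ht]

lemma wd_iter_congr {f g : ℂ → ℂ} {x : ℂ} (n : ℕ) (h : f =ᶠ[𝓝 x] g) :
    wd^[n] f =ᶠ[𝓝 x] wd^[n] g := by
  induction n with
  | zero => exact h
  | succ n ih =>
    rw [Function.iterate_succ_apply', Function.iterate_succ_apply']
    exact wd_congr ih

lemma diffAt_mul_conj {A B : ℂ → ℂ} {t : ℂ} (hA : AnalyticAt ℂ A t) (hB : AnalyticAt ℂ B t) :
    DifferentiableAt ℝ (fun u => A u * (starRingEnd ℂ) (B u)) t :=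
  (hA.differentiableAt.restrictScalars ℝ).mul
    (differentiableAt_conj_comp (hB.differentiableAt.restrictScalars ℝ))

lemma wdbar_iter_sum {ι : Type*} (s : Finset ι) (A B : ι → ℂ → ℂ)
    (hA : ∀ i ∈ s, AnalyticAt ℂ (A i) 0) (hB : ∀ i ∈ s, AnalyticAt ℂ (B i) 0) (b : ℕ) :
    wdbar^[b] (fun t => ∑ i ∈ s, A i t * (starRingEnd ℂ) (B i t)) =ᶠ[𝓝 0]
      fun t => ∑ i ∈ s, A i t * (starRingEnd ℂ) (deriv^[b] (B i) t) := by
  induction b with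
  | zero => exact EventuallyEq.refl _ _
  | succ b ih =>
    rw [Function.iterate_succ_apply']
    refine (wdbar_congr ih).trans ?_
    have hev : ∀ᶠ t in 𝓝 (0 : ℂ),
        ∀ i ∈ s, AnalyticAt ℂ (A i) t ∧ AnalyticAt ℂ (deriv^[b] (B i)) t := by
      rw [eventually_all_finset]
      intro i hi
      filter_upwards [(hA i hi).eventually_analyticAt,
        (analyticAt_iter_deriv (hB i hi) b).eventually_analyticAt] with t h1 h2
      exact ⟨h1, h2⟩
    filter_upwards [hev] with t ht
    rw [wdbar_sum s _ (fun i hi => diffAt_mul_conj (ht i hi).1 (ht i hi).2)]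
    refine Finset.sum_congr rfl fun i hi => ?_
    rw [wdbar_mul_conj (ht i hi).1.differentiableAt (ht i hi).2.differentiableAt,
      ← Function.iterate_succ_apply' deriv]

lemma wd_iter_sum {ι : Type*} (s : Finset ι) (A C : ι → ℂ → ℂ)
    (hA : ∀ i ∈ s, AnalyticAt ℂ (A i) 0) (hC : ∀ i ∈ s, AnalyticAt ℂ (C i) 0) (a : ℕ) :
    wd^[a] (fun t => ∑ i ∈ s, A i t * (starRingEnd ℂ) (C i t)) =ᶠ[𝓝 0]
      fun t => ∑ i ∈ s, deriv^[a] (A i) t * (starRingEnd ℂ) (C i t) := by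
  induction a with
  | zero => exact EventuallyEq.refl _ _
  | succ a ih =>
    rw [Function.iterate_succ_apply']
    refine (wd_congr ih).trans ?_
    have hev : ∀ᶠ t in 𝓝 (0 : ℂ),
        ∀ i ∈ s, AnalyticAt ℂ (deriv^[a] (A i)) t ∧ AnalyticAt ℂ (C i) t := by
      rw [eventually_all_finset]
      intro i hi
      filter_upwards [(analyticAt_iter_deriv (hA i hi) a).eventually_analyticAt,
        (hC i hi).eventually_analyticAt] with t h1 h2
      exact ⟨h1, h2⟩
    filter_upwards [hev] with t ht
    rw [wd_sum s _ (fun i hi => diffAt_mul_conj (ht i hi).1 (ht i hi).2)]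
    refine Finset.sum_congr rfl fun i hi => ?_
    rw [wd_mul_conj (ht i hi).1.differentiableAt (ht i hi).2.differentiableAt,
      ← Function.iterate_succ_apply' deriv]

lemma Dab_sum {ι : Type*} (s : Finset ι) (A B : ι → ℂ → ℂ)
    (hA : ∀ i ∈ s, AnalyticAt ℂ (A i) 0) (hB : ∀ i ∈ s, AnalyticAt ℂ (B i) 0) (a b : ℕ) :
    Dab a b (fun t => ∑ i ∈ s, A i t * (starRingEnd ℂ) (B i t)) 0
      = ∑ i ∈ s, deriv^[a] (A i) 0 * (starRingEnd ℂ) (deriv^[b] (B i) 0) := by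
  have h1 := wdbar_iter_sum s A B hA hB b
  have h2 := wd_iter_congr a h1
  have h3 := wd_iter_sum s A (fun i => deriv^[b] (B i)) hA
    (fun i hi => analyticAt_iter_deriv (hB i hi) b) a
  exact (h2.trans h3).eq_of_nhds

lemma deriv_mul_zero {f g : ℂ → ℂ} (hf : AnalyticAt ℂ f 0) (hg : AnalyticAt ℂ g 0)
    (hf0 : f 0 = 0) (hg0 : g 0 = 0) : deriv (fun t => f t * g t) 0 = 0 := by
  rw [deriv_fun_mul hf.differentiableAt hg.differentiableAt, hf0, hg0]
  ring

lemma deriv2_mul {f g : ℂ → ℂ} (hf : AnalyticAt ℂ f 0) (hg : AnalyticAt ℂ g 0) :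
    deriv (deriv (fun t => f t * g t)) 0
      = deriv (deriv f) 0 * g 0 + 2 * deriv f 0 * deriv g 0 + f 0 * deriv (deriv g) 0 := by
  have hev : deriv (fun t => f t * g t) =ᶠ[𝓝 (0 : ℂ)]
      fun t => deriv f t * g t + f t * deriv g t := by
    filter_upwards [hf.eventually_analyticAt, hg.eventually_analyticAt] with t h1 h2
    exact deriv_mul h1.differentiableAt h2.differentiableAt
  rw [hev.deriv_eq]
  rw [deriv_fun_add (by exact ((analyticAt_deriv hf).mul hg).differentiableAt :
        DifferentiableAt ℂ (fun t => deriv f t * g t) 0)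
      (by exact (hf.mul (analyticAt_deriv hg)).differentiableAt :
        DifferentiableAt ℂ (fun t => f t * deriv g t) 0),
    deriv_fun_mul (analyticAt_deriv hf).differentiableAt hg.differentiableAt,
    deriv_fun_mul hf.differentiableAt (analyticAt_deriv hg).differentiableAt]
  ring

lemma deriv2_mul_zero {f g : ℂ → ℂ} (hf : AnalyticAt ℂ f 0) (hg : AnalyticAt ℂ g 0)
    (hf0 : f 0 = 0) (hg0 : g 0 = 0) (hg1 : deriv g 0 = 0) :
    deriv (deriv (fun t => f t * g t)) 0 = 0 := by
  rw [deriv2_mul hf hg, hf0, hg0, hg1]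
  ring

lemma deriv_div2 (F : ℂ → ℂ) : deriv (fun t => F t / 2) = fun x => deriv F x / 2 :=
  funext fun x => deriv_div_const 2

lemma deriv2_div2 (F : ℂ → ℂ) :
    deriv (deriv (fun t => F t / 2)) 0 = deriv (deriv F) 0 / 2 := by
  rw [deriv_div2]
  exact deriv_div_const 2

lemma deriv_neg_div2 (F : ℂ → ℂ) : deriv (fun t => -F t / 2) = fun x => -deriv F x / 2 := by
  funext x
  rw [deriv_div_const, deriv.fun_neg]

lemma deriv2_neg_div2 (F : ℂ → ℂ) :
    deriv (deriv (fun t => -F t / 2)) 0 = -deriv (deriv F) 0 / 2 := by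
  rw [deriv_neg_div2]
  have : (fun x => -deriv F x / 2) = fun x => -(deriv F x) / 2 := rfl
  rw [this]
  rw [show (fun x => -deriv F x / 2) = (fun x => -(deriv F) x / 2) from rfl]
  rw [deriv_div_const, deriv.fun_neg]

noncomputable def AV (u v : ℂ → ℂ) : Fin 8 → ℂ → ℂ
  | 0 => fun t => u t * (u t * u t) / 2
  | 1 => fun t => u t / 2
  | 2 => fun t => -(u t * (v t * (v t * v t))) / 2
  | 3 => fun t => -u t / 2
  | 4 => fun t => v t * (v t * v t) / 2
  | 5 => fun t => v t / 2
  | 6 => fun t => -(u t * u t) / 2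
  | 7 => fun t => -v t / 2

noncomputable def BV (u v : ℂ → ℂ) : Fin 8 → ℂ → ℂ
  | 0 => u
  | 1 => fun t => u t * (u t * u t)
  | 2 => u
  | 3 => fun t => u t * (v t * (v t * v t))
  | 4 => v
  | 5 => fun t => v t * (v t * v t)
  | 6 => v
  | 7 => fun t => u t * u t

lemma norm_sq_complex (z : ℂ) : ((‖z‖ : ℂ))^2 = z * (starRingEnd ℂ) z := by
  rw [← Complex.ofReal_pow, Complex.mul_conj, Complex.normSq_eq_norm_sq]

lemma ofReal_re' (z : ℂ) : ((z.re : ℝ) : ℂ) = (z + (starRingEnd ℂ) z) / 2 := by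
  rw [Complex.add_conj]
  push_cast
  ring

lemma decomp (u v : ℂ → ℂ) :
    (fun t => ((rDef 0 (u t) (v t) : ℝ) : ℂ))
      = fun t => ∑ i : Fin 8, AV u v i t * (starRingEnd ℂ) (BV u v i t) := by
  funext t
  simp only [rDef, Fin.sum_univ_eight]
  show _ = AV u v 0 t * _ + AV u v 1 t * _ + AV u v 2 t * _ + AV u v 3 t * _
      + AV u v 4 t * _ + AV u v 5 t * _ + AV u v 6 t * _ + AV u v 7 t * _
  simp only [AV, BV]
  push_cast
  rw [ofReal_re' (u t ^ 2 - v t ^ 3), ofReal_re' (v t ^ 2), ofReal_re' (u t ^ 2 * (starRingEnd ℂ) (v t))]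
  rw [norm_sq_complex, norm_sq_complex]
  simp only [map_mul, map_sub, map_pow, Complex.conj_conj, Complex.zero_re, Complex.ofReal_zero]
  ring

lemma deriv2_neg (F : ℂ → ℂ) :
    deriv (deriv (fun t => -F t)) 0 = -deriv (deriv F) 0 := by
  rw [deriv.fun_neg']
  exact deriv.fun_neg

lemma iterate_deriv_zero (f : ℂ → ℂ) : deriv^[0] f = f := rfl
lemma iterate_deriv_one (f : ℂ → ℂ) : deriv^[1] f = deriv f := rfl
lemma iterate_deriv_two (f : ℂ → ℂ) : deriv^[2] f = deriv (deriv f) := by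
  rw [show (2:ℕ) = 1+1 from rfl, Function.iterate_succ_apply', Function.iterate_one]

/-- If γ = (0,γ²,γ³) is holomorphic with γ²(0)=γ³(0)=0 and (γ²)'(0)≠0, (γ³)'(0)≠0, then the
coefficient of t²t̄ in the Taylor expansion of r∘γ (i.e. D^{2,1}[r∘γ](0)) is nonzero; in
particular r∘γ vanishes to order exactly 3 at 0. -/
theorem stmt2 (γ₂ γ₃ : ℂ → ℂ) (h₂ : AnalyticAt ℂ γ₂ 0) (h₃ : AnalyticAt ℂ γ₃ 0)
    (h₂0 : γ₂ 0 = 0) (h₃0 : γ₃ 0 = 0) (h₂' : deriv γ₂ 0 ≠ 0) (h₃' : deriv γ₃ 0 ≠ 0) :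
    Dab 2 1 (fun t => ((rDef 0 (γ₂ t) (γ₃ t) : ℝ) : ℂ)) 0 ≠ 0 ∧
    (∀ a b : ℕ, a + b < 3 → Dab a b (fun t => ((rDef 0 (γ₂ t) (γ₃ t) : ℝ) : ℂ)) 0 = 0) := by
  have two_ne : (2:ℂ) ≠ 0 := two_ne_zero
  have hAan : ∀ i ∈ (Finset.univ : Finset (Fin 8)), AnalyticAt ℂ (AV γ₂ γ₃ i) 0 := by
    intro i _
    fin_cases i
    · exact (h₂.mul (h₂.mul h₂)).div analyticAt_const two_ne
    · exact h₂.div analyticAt_const two_ne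
    · exact ((h₂.mul (h₃.mul (h₃.mul h₃))).neg).div analyticAt_const two_ne
    · exact (h₂.neg).div analyticAt_const two_ne
    · exact (h₃.mul (h₃.mul h₃)).div analyticAt_const two_ne
    · exact h₃.div analyticAt_const two_ne
    · exact ((h₂.mul h₂).neg).div analyticAt_const two_ne
    · exact (h₃.neg).div analyticAt_const two_ne
  have hBan : ∀ i ∈ (Finset.univ : Finset (Fin 8)), AnalyticAt ℂ (BV γ₂ γ₃ i) 0 := by
    intro i _
    fin_cases i
    · exact h₂
    · exact h₂.mul (h₂.mul h₂)
    · exact h₂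
    · exact h₂.mul (h₃.mul (h₃.mul h₃))
    · exact h₃
    · exact h₃.mul (h₃.mul h₃)
    · exact h₃
    · exact h₂.mul h₂
  have key : ∀ a b : ℕ, Dab a b (fun t => ((rDef 0 (γ₂ t) (γ₃ t) : ℝ) : ℂ)) 0
      = ∑ i : Fin 8, deriv^[a] (AV γ₂ γ₃ i) 0 * (starRingEnd ℂ) (deriv^[b] (BV γ₂ γ₃ i) 0) := by
    intro a b
    rw [decomp γ₂ γ₃]
    exact Dab_sum Finset.univ _ _ hAan hBan a b
  -- derivative values
  have d_u2 : deriv (fun t => γ₂ t * γ₂ t) 0 = 0 := deriv_mul_zero h₂ h₂ h₂0 h₂0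
  have d_u3 : deriv (fun t => γ₂ t * (γ₂ t * γ₂ t)) 0 = 0 :=
    deriv_mul_zero h₂ (h₂.mul h₂) h₂0 (by simp [h₂0])
  have d_v3 : deriv (fun t => γ₃ t * (γ₃ t * γ₃ t)) 0 = 0 :=
    deriv_mul_zero h₃ (h₃.mul h₃) h₃0 (by simp [h₃0])
  have d_uv3 : deriv (fun t => γ₂ t * (γ₃ t * (γ₃ t * γ₃ t))) 0 = 0 :=
    deriv_mul_zero h₂ (h₃.mul (h₃.mul h₃)) h₂0 (by simp [h₃0])
  have dd_u3 : deriv (deriv (fun t => γ₂ t * (γ₂ t * γ₂ t))) 0 = 0 :=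
    deriv2_mul_zero h₂ (h₂.mul h₂) h₂0 (by simp [h₂0]) d_u2
  have dd_v3 : deriv (deriv (fun t => γ₃ t * (γ₃ t * γ₃ t))) 0 = 0 := by
    refine deriv2_mul_zero h₃ (h₃.mul h₃) h₃0 (by simp [h₃0]) ?_
    exact deriv_mul_zero h₃ h₃ h₃0 h₃0
  have dd_uv3 : deriv (deriv (fun t => γ₂ t * (γ₃ t * (γ₃ t * γ₃ t)))) 0 = 0 :=
    deriv2_mul_zero h₂ (h₃.mul (h₃.mul h₃)) h₂0 (by simp [h₃0]) d_v3
  have dd_u2 : deriv (deriv (fun t => γ₂ t * γ₂ t)) 0 = 2 * deriv γ₂ 0 ^ 2 := by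
    rw [deriv2_mul h₂ h₂, h₂0]
    ring
  constructor
  · rw [key 2 1, Fin.sum_univ_eight]
    simp only [AV, BV, iterate_deriv_one, iterate_deriv_two]
    simp only [deriv2_div2, deriv2_neg_div2, deriv2_neg]
    rw [dd_u3, dd_uv3, dd_v3, dd_u2, d_u3, d_uv3, d_v3, d_u2]
    simp only [map_zero, mul_zero, zero_div, zero_mul, neg_zero, zero_add, add_zero]
    intro hcontr
    apply h₃'
    have h2 : -(2 * deriv γ₂ 0 ^ 2) / 2 ≠ 0 := by
      apply div_ne_zero _ two_ne
      exact neg_ne_zero.mpr (mul_ne_zero two_ne (pow_ne_zero _ h₂'))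
    have := (mul_eq_zero.mp hcontr).resolve_left h2
    exact (map_eq_zero _).mp this
  · intro a b hab
    rcases Nat.eq_zero_or_pos a with ha | ha
    · subst ha
      rw [key 0 b]
      apply Finset.sum_eq_zero
      intro i _
      rw [iterate_deriv_zero]
      have : AV γ₂ γ₃ i 0 = 0 := by
        fin_cases i <;> simp [AV, h₂0, h₃0]
      rw [this, zero_mul]
    rcases Nat.eq_zero_or_pos b with hb | hb
    · subst hb
      rw [key a 0]
      apply Finset.sum_eq_zero
      intro i _
      rw [iterate_deriv_zero]
      have : BV γ₂ γ₃ i 0 = 0 := by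
        fin_cases i <;> simp [BV, h₂0, h₃0]
      rw [this, map_zero, mul_zero]
    have ha1 : a = 1 := by omega
    have hb1 : b = 1 := by omega
    subst ha1; subst hb1
    rw [key 1 1, Fin.sum_univ_eight]
    simp only [AV, BV, iterate_deriv_one]
    simp only [deriv_div_const, deriv.fun_neg]
    rw [d_u3, d_uv3, d_v3, d_u2]
    simp
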